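/- Let M be a matroid of rank n on S = {1,…,d}, represented over K = ℝ or ℂ with kernel Z = ker R of dimension b, and equip E* with the inner product making (e*_i) orthogonal with ||e*_i||² = x_i. Let X be the determinantal random subset of S associated with the orthogonal projection onto im D (D the transpose of R). Then for any fixed basis 𝒵 of Z and any basis T of M, P(X = T) is proportional to |det(𝒵/𝒵_T)|² · Π_{i∈T} x_i, with normalizing constant Σ_{T basis} |det(𝒵/𝒵_T)|² x^T = (Π_{i∈S} x_i) · ||J_x γ_1 ∧ … ∧ J_x γ_b||², where 𝒵 = (γ_1,…,γ_b) and J_x : e_i ↦ x_i^{−1} e*_i. -/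

import Mathlib

/-! Framework: a linear matroid on a finite linearly ordered set `S`, represented over
`ℝ` by `R : E → F` with `E = S → ℝ`, kernel `Z = ker R`; `E* = S → ℝ` carries the
inner product with `‖e*_i‖² = x_i`; `im D = (J_x Z)^⊥` is the annihilator of `Z`. -/

section Matroid

variable {S : Type*} [Fintype S] [DecidableEq S] [LinearOrder S]
  {F : Type*} [AddCommGroup F] [Module ℝ F]

/-- The `x`-weighted inner product on `E* = S → ℝ`. -/
def innerx (x : S → ℝ) (α β : S → ℝ) : ℝ := ∑ i, x i * α i * β i

/-- `T` is a basis of the matroid represented by `R`. -/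
def IsMBasis (R : (S → ℝ) →ₗ[ℝ] F) (T : Finset S) : Prop :=
  T.card = Module.finrank ℝ (LinearMap.range R) ∧
  LinearIndependent ℝ (fun i : T => R (Pi.single (i : S) 1))

/-- The annihilator `{α | Σ_i α_i c_i = 0 for all c ∈ ker R}`; in the `x`-weighted
inner product this is `(J_x Z)^⊥ = im D = (ker D*)^⊥`, since
`⟨J_x c, α⟩_x = Σ_i c_i α_i`. -/
def annih (R : (S → ℝ) →ₗ[ℝ] F) : Submodule ℝ (S → ℝ) where
  carrier := {α | ∀ c, R c = 0 → ∑ i, α i * c i = 0}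
  add_mem' := fun ha hb c hc => by
    simp [add_mul, Finset.sum_add_distrib, ha c hc, hb c hc]
  zero_mem' := fun c hc => by simp
  smul_mem' := fun r α hα c hc => by
    have h : ∑ i, r * α i * c i = r * ∑ i, α i * c i := by
      rw [Finset.mul_sum]
      exact Finset.sum_congr rfl fun i _ => by ring
    simpa [h] using congrArg (r * ·) (hα c hc)

/-- The change-of-basis determinant `det(𝒵/𝒵_T)` between a basis `γ` of `Z = ker R`
and the fundamental basis associated with `T` (the matrix of coordinates of the `γᵢ`
outside `T`, in the fixed order). -/
noncomputable def cbDet {n : ℕ} (γ : Fin n → (S → ℝ)) (T : Finset S) : ℝ :=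
  if h : ((Tᶜ : Finset S).sort (· ≤ ·)).length = n then
    Matrix.det (Matrix.of fun i j : Fin n =>
      γ j (((Tᶜ : Finset S).sort (· ≤ ·)).get (Fin.cast h.symm i)))
  else 0

end Matroid


@[to_additive]
lemma prod_sort_get' {S : Type*} [LinearOrder S] [DecidableEq S] {M : Type*} [CommMonoid M]
    (s : Finset S) {n : ℕ} (h : (s.sort (· ≤ ·)).length = n) (f : S → M) :
    ∏ k : Fin n, f ((s.sort (· ≤ ·)).get (Fin.cast h.symm k)) = ∏ i ∈ s, f i := by
  have h1 : ∏ k : Fin n, f ((s.sort (· ≤ ·)).get (Fin.cast h.symm k))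
      = ∏ k : Fin (s.sort (· ≤ ·)).length, f ((s.sort (· ≤ ·)).get k) :=
    Fintype.prod_equiv (finCongr h.symm) _ _ (fun k => rfl)
  rw [h1]
  simp only [List.get_eq_getElem]
  rw [Fin.prod_univ_fun_getElem (s.sort (· ≤ ·)) f, ← List.prod_toFinset f (Finset.sort_nodup s (· ≤ ·)),
    Finset.sort_toFinset s (· ≤ ·)]

lemma aux_mul_inv (a d : ℝ) (h : a ≠ 0) : a * d * a⁻¹ = d := by
  field_simp

open Classical

/-- **Probability density of the determinantal measure on matroid bases.**
Let `X` be the determinantal random subset of `S` associated with the `x`-orthogonal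
projection `P` onto `im D` (the annihilator of `Z = ker R`), so
`P(X = T) = det (K)_{T×T}` with kernel `K(i,j) = √x_i/√x_j · (P e*_j)_i`.  Then for
every basis `T` of the matroid and any basis `𝒵 = (γ₁,…,γ_b)` of `Z`,
`P(X = T) = |det(𝒵/𝒵_T)|² x^T / ((Π_i x_i) · ‖J_xγ₁ ∧ … ∧ J_xγ_b‖²)`, the norm being
the Gram determinant `det(⟨J_xγ_a, J_xγ_c⟩_x) = det(Σ_i x_i⁻¹ γ_a(i) γ_c(i))`. -/
theorem determinantal_density_matroid_bases
    {S : Type*} [Fintype S] [DecidableEq S] [LinearOrder S]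
    {F : Type*} [AddCommGroup F] [Module ℝ F]
    (x : S → ℝ) (hx : ∀ i, 0 < x i)
    (R : (S → ℝ) →ₗ[ℝ] F)
    (b : ℕ) (hb : Module.finrank ℝ (LinearMap.ker R) = b)
    -- a basis `𝒵` of `Z = ker R`
    (γ : Fin b → (S → ℝ))
    (hγ_indep : LinearIndependent ℝ γ)
    (hγ_span : Submodule.span ℝ (Set.range γ) = LinearMap.ker R)
    -- `P`, the `x`-orthogonal projection onto `im D = annih R`
    (P : (S → ℝ) →ₗ[ℝ] (S → ℝ))
    (hP1 : ∀ α, P (P α) = P α)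
    (hP2 : ∀ α β, innerx x (P α) β = innerx x α (P β))
    (hP3 : LinearMap.range P = annih R) :
    ∀ T : Finset S, IsMBasis R T →
      Matrix.det (Matrix.of fun i j : T =>
          Real.sqrt (x i) / Real.sqrt (x j) * P (Pi.single (j : S) 1) i) =
        (cbDet γ T) ^ 2 * (∏ i ∈ T, x i) /
          ((∏ i : S, x i) *
            Matrix.det (Matrix.of fun a c : Fin b =>
              ∑ i : S, (x i)⁻¹ * γ a i * γ c i)) := by
  intro T hT
  have hx0 : ∀ i, x i ≠ 0 := fun i => (hx i).ne'
  -- cardinalities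
  have hcard : T.card + b = Fintype.card S := by
    have h1 := LinearMap.finrank_range_add_finrank_ker R
    rwa [Module.finrank_fintype_fun_eq_card, hb, ← hT.1] at h1
  have hTc : (Tᶜ : Finset S).card = b := by
    rw [Finset.card_compl]; omega
  set l : List S := (Tᶜ : Finset S).sort (· ≤ ·) with hldef
  have hlen : l.length = b := by rw [hldef, Finset.length_sort]; exact hTc
  set G : Matrix (Fin b) (Fin b) ℝ :=
    Matrix.of fun a c : Fin b => ∑ i : S, (x i)⁻¹ * γ a i * γ c i with hGdef
  -- the Gram determinant is nonzero
  have hGdet : G.det ≠ 0 := by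
    intro h0
    obtain ⟨v, hv0, hmul⟩ := (Matrix.exists_mulVec_eq_zero_iff).mpr h0
    set w : S → ℝ := fun i => ∑ a, v a * γ a i with hw
    have step1 : ∀ a, G.mulVec v a = ∑ i, (x i)⁻¹ * γ a i * w i := by
      intro a
      simp only [Matrix.mulVec, dotProduct, hGdef, Matrix.of_apply,
        Finset.sum_mul, hw, Finset.mul_sum]
      rw [Finset.sum_comm]
      exact Finset.sum_congr rfl fun i _ => Finset.sum_congr rfl fun c _ => by ring
    have hq : ∑ i, (x i)⁻¹ * w i ^ 2 = 0 := by
      have e1 : ∑ a, v a * G.mulVec v a = ∑ i, (x i)⁻¹ * w i ^ 2 := by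
        simp only [step1, Finset.mul_sum]
        rw [Finset.sum_comm]
        refine Finset.sum_congr rfl fun i _ => ?_
        rw [sq, hw, Finset.mul_sum, Finset.mul_sum]
        exact Finset.sum_congr rfl fun a _ => by ring
      rw [← e1, hmul]
      simp
    have hwz : ∀ i, w i = 0 := by
      intro i
      have hnn : ∀ j ∈ Finset.univ, (0:ℝ) ≤ (x j)⁻¹ * w j ^ 2 :=
        fun j _ => mul_nonneg (inv_nonneg.mpr (hx j).le) (sq_nonneg _)
      have h2 := (Finset.sum_eq_zero_iff_of_nonneg hnn).mp hq i (Finset.mem_univ i)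
      have h3 : w i ^ 2 = 0 :=
        (mul_eq_zero.mp h2).resolve_left (inv_ne_zero (hx0 i))
      exact (pow_eq_zero_iff two_ne_zero).mp h3
    have hcontra : ∀ a, v a = 0 := by
      apply Fintype.linearIndependent_iff.mp hγ_indep
      funext i
      simpa [hw] using hwz i
    exact hv0 (funext hcontra)
  have hGunit : IsUnit G.det := isUnit_iff_ne_zero.mpr hGdet
  have hGinv : G * G⁻¹ = 1 := Matrix.mul_nonsing_inv G hGunit
  have hGinv' : G⁻¹ * G = 1 := Matrix.nonsing_inv_mul G hGunit
  -- basic facts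
  have hγker : ∀ a, R (γ a) = 0 := by
    intro a
    have : γ a ∈ LinearMap.ker R := hγ_span ▸ Submodule.subset_span ⟨a, rfl⟩
    exact this
  have hannih : ∀ α : S → ℝ, (∀ a, ∑ i, α i * γ a i = 0) → α ∈ annih R := by
    intro α hα c hc
    have hc2 : c ∈ Submodule.span ℝ (Set.range γ) := by
      rw [hγ_span]; exact LinearMap.mem_ker.mpr hc
    obtain ⟨u, hu⟩ := Submodule.mem_span_range_iff_exists_fun ℝ |>.mp hc2
    have hce : ∀ i, c i = ∑ a, u a * γ a i := by
      intro i
      rw [← hu]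
      simp [Finset.sum_apply]
    calc ∑ i, α i * c i = ∑ i, ∑ a, u a * (α i * γ a i) := by
          refine Finset.sum_congr rfl fun i _ => ?_
          rw [hce i, Finset.mul_sum]
          exact Finset.sum_congr rfl fun a _ => by ring
      _ = ∑ a, u a * ∑ i, α i * γ a i := by
          rw [Finset.sum_comm]
          exact Finset.sum_congr rfl fun a _ => by rw [Finset.mul_sum]
      _ = 0 := by simp [hα]
  have hPfix : ∀ β : S → ℝ, β ∈ annih R → P β = β := by
    intro β hβ
    rw [← hP3] at hβ
    obtain ⟨β', rfl⟩ := hβ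
    exact hP1 β'
  have hinner0 : ∀ β : S → ℝ, innerx x β β = 0 → β = 0 := by
    intro β hβ
    funext i
    have hnn : ∀ j ∈ Finset.univ, (0:ℝ) ≤ x j * β j * β j := fun j _ => by
      rw [mul_assoc]; exact mul_nonneg (hx j).le (mul_self_nonneg _)
    have h2 := (Finset.sum_eq_zero_iff_of_nonneg hnn).mp hβ i (Finset.mem_univ i)
    rw [mul_assoc] at h2
    have h3 : β i * β i = 0 := (mul_eq_zero.mp h2).resolve_left (hx0 i)
    simpa using mul_self_eq_zero.mp h3
  have hPδ : ∀ a, P (fun i => (x i)⁻¹ * γ a i) = 0 := by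
    intro a
    set δ : S → ℝ := fun i => (x i)⁻¹ * γ a i with hδ
    apply hinner0
    have h1 : innerx x (P δ) (P δ) = innerx x δ (P δ) := by
      rw [hP2 δ (P δ), hP1]
    rw [h1]
    have hmem : P δ ∈ annih R := hP3 ▸ ⟨δ, rfl⟩
    have h3 : ∑ i, P δ i * γ a i = 0 := hmem (γ a) (hγker a)
    calc innerx x δ (P δ) = ∑ i, P δ i * γ a i := by
          unfold innerx
          refine Finset.sum_congr rfl fun i _ => ?_
          rw [hδ]
          field_simp [hx0 i]
      _ = 0 := h3
  -- explicit formula for the projection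
  have hPformula : ∀ α : S → ℝ, P α = fun i : S =>
      α i - ∑ a, (G⁻¹.mulVec (fun c => ∑ j, γ c j * α j)) a * ((x i)⁻¹ * γ a i) := by
    intro α
    set s : Fin b → ℝ := fun c => ∑ j, γ c j * α j with hs
    set q : S → ℝ := fun i => ∑ a, G⁻¹.mulVec s a * ((x i)⁻¹ * γ a i) with hq
    have hq0 : P q = 0 := by
      have hqsum : q = ∑ a, (G⁻¹.mulVec s a) • (fun i => (x i)⁻¹ * γ a i) := by
        funext i
        rw [hq]
        simp [Finset.sum_apply]
      rw [hqsum, map_sum]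
      simp [hPδ]
    have hmem : (fun i => α i - q i) ∈ annih R := by
      apply hannih
      intro a
      have key : ∑ i, q i * γ a i = s a := by
        have e1 : ∑ i, q i * γ a i = ∑ a', G⁻¹.mulVec s a' * G a a' := by
          simp only [hq, Finset.sum_mul]
          rw [Finset.sum_comm]
          refine Finset.sum_congr rfl fun a' _ => ?_
          simp only [hGdef, Matrix.of_apply, Finset.mul_sum]
          exact Finset.sum_congr rfl fun i _ => by ring
        have e2 : ∑ a', G⁻¹.mulVec s a' * G a a' = (G.mulVec (G⁻¹.mulVec s)) a := by
          simp only [Matrix.mulVec, dotProduct]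
          exact Finset.sum_congr rfl fun a' _ => by ring
        rw [e1, e2, Matrix.mulVec_mulVec, hGinv, Matrix.one_mulVec]
      simp only [sub_mul, Finset.sum_sub_distrib, key, hs]
      rw [sub_eq_zero]
      exact Finset.sum_congr rfl fun i _ => mul_comm _ _
    have hfix : P (fun i => α i - q i) = fun i => α i - q i := hPfix _ hmem
    have hsplit : α = (fun i => α i - q i) + q := by funext i; simp
    calc P α = P ((fun i => α i - q i) + q) := by rw [← hsplit]
      _ = P (fun i => α i - q i) + P q := map_add _ _ _
      _ = fun i : S => α i - q i := by rw [hfix, hq0]; simp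
  -- the matrices
  set A : Matrix T (Fin b) ℝ :=
    Matrix.of (fun (i : T) (a : Fin b) => (x (i:S))⁻¹ * γ a i) with hA
  set C : Matrix (Fin b) T ℝ := Matrix.of (fun (a : Fin b) (j : T) => γ a j) with hC
  have hMeq : (Matrix.of fun i j : T => P (Pi.single (j:S) 1) i)
      = 1 - A * (G⁻¹ * C) := by
    ext i j
    have := congrFun (hPformula (Pi.single (j:S) 1)) (i:S)
    rw [Matrix.of_apply, this]
    have hsj : (fun c => ∑ k, γ c k * (Pi.single (j:S) 1 : S → ℝ) k) = fun c => γ c j := by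
      funext c
      simp [Pi.single_apply, mul_ite, Finset.sum_ite_eq']
    simp only [hsj]
    have h1 : (Pi.single (↑j) 1 : S → ℝ) (↑i : S) = (1 : Matrix T T ℝ) i j := by
      rw [Matrix.one_apply, Pi.single_apply]
      simp [Subtype.coe_inj]
    have h2 : ∑ a, G⁻¹.mulVec (fun c => γ c (j:S)) a * ((x (i:S))⁻¹ * γ a (i:S))
        = (A * (G⁻¹ * C)) i j := by
      rw [Matrix.mul_apply]
      refine Finset.sum_congr rfl fun a _ => ?_
      rw [Matrix.mul_apply]
      simp only [Matrix.mulVec, dotProduct, hA, hC, Matrix.of_apply]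
      rw [Finset.sum_mul, Finset.mul_sum]
      exact Finset.sum_congr rfl fun c _ => by ring
    rw [Matrix.sub_apply, h1, h2]
  -- determinant of the kernel block via Weinstein–Aronszajn
  have hdetM : (Matrix.of fun i j : T => P (Pi.single (j:S) 1) i).det
      = (G - C * A).det * (G.det)⁻¹ := by
    rw [hMeq, Matrix.det_one_sub_mul_comm]
    have e1 : (1 : Matrix (Fin b) (Fin b) ℝ) - G⁻¹ * C * A = G⁻¹ * (G - C * A) := by
      rw [Matrix.mul_sub, hGinv', Matrix.mul_assoc]
    rw [e1, Matrix.det_mul, Matrix.det_nonsing_inv, Ring.inverse_eq_inv']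
    ring
  -- the complementary Gram block
  set g : Fin b → S := fun k => l.get (Fin.cast hlen.symm k) with hg
  set N : Matrix (Fin b) (Fin b) ℝ := Matrix.of (fun a k => γ a (g k)) with hN
  have hGCA : G - C * A = N * Matrix.diagonal (fun k => (x (g k))⁻¹) * N.transpose := by
    ext a c
    have hsplit := (Finset.sum_add_sum_compl T fun i => (x i)⁻¹ * γ a i * γ c i).symm
    have hTsum : ∑ j : T, γ a j * ((x (j:S))⁻¹ * γ c j)
        = ∑ i ∈ T, (x i)⁻¹ * γ a i * γ c i := by
      rw [← Finset.sum_coe_sort T]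
      exact Finset.sum_congr rfl fun i _ => by ring
    have hcsum : ∑ i ∈ (Tᶜ : Finset S), (x i)⁻¹ * γ a i * γ c i
        = ∑ k : Fin b, (x (g k))⁻¹ * γ a (g k) * γ c (g k) :=
      (sum_sort_get' (Tᶜ) hlen _).symm
    simp only [Matrix.sub_apply, Matrix.mul_apply, Matrix.mul_diagonal,
      Matrix.transpose_apply, hN, hC, hA, hGdef, Matrix.of_apply]
    rw [hsplit, ← hTsum, hcsum, add_sub_cancel_left]
    refine Finset.sum_congr rfl fun k _ => ?_
    simp only [Matrix.diagonal_apply, mul_ite, mul_zero, ite_mul, zero_mul,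
      Finset.sum_ite_eq, Finset.sum_ite_eq', Finset.mem_univ, if_true]
    ring
  have hcb : cbDet γ T = N.det := by
    rw [cbDet, dif_pos hlen, ← Matrix.det_transpose N]
    congr 1
  have hGCAdet : (G - C * A).det = (cbDet γ T) ^ 2 * (∏ i ∈ (Tᶜ : Finset S), x i)⁻¹ := by
    rw [hGCA, Matrix.det_mul, Matrix.det_mul, Matrix.det_diagonal, Matrix.det_transpose,
      hcb]
    have : ∏ k : Fin b, (x (g k))⁻¹ = (∏ i ∈ (Tᶜ : Finset S), x i)⁻¹ := by
      rw [← Finset.prod_inv_distrib]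
      exact prod_sort_get' (Tᶜ) hlen (fun i => (x i)⁻¹)
    rw [this]
    ring
  -- remove the diagonal conjugation
  have hs0 : ∀ i : T, Real.sqrt (x (i:S)) ≠ 0 :=
    fun i => ne_of_gt (Real.sqrt_pos.mpr (hx i))
  have hKeq : (Matrix.of fun i j : T =>
        Real.sqrt (x i) / Real.sqrt (x j) * P (Pi.single (j : S) 1) i)
      = Matrix.diagonal (fun i : T => Real.sqrt (x (i:S)))
        * (Matrix.of fun i j : T => P (Pi.single (j:S) 1) i)
        * Matrix.diagonal (fun j : T => (Real.sqrt (x (j:S)))⁻¹) := by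
    ext i j
    rw [Matrix.mul_diagonal, Matrix.diagonal_mul, Matrix.of_apply, Matrix.of_apply]
    rw [div_eq_mul_inv]
    ring
  have hKdet : (Matrix.of fun i j : T =>
        Real.sqrt (x i) / Real.sqrt (x j) * P (Pi.single (j : S) 1) i).det
      = (Matrix.of fun i j : T => P (Pi.single (j:S) 1) i).det := by
    rw [hKeq, Matrix.det_mul, Matrix.det_mul, Matrix.det_diagonal, Matrix.det_diagonal]
    rw [Finset.prod_inv_distrib]
    exact aux_mul_inv _ _ (Finset.prod_ne_zero_iff.mpr fun i _ => hs0 i)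
  -- assemble
  rw [hKdet, hdetM, hGCAdet]
  have hprodT : (∏ i ∈ T, x i) ≠ 0 := Finset.prod_ne_zero_iff.mpr fun i _ => hx0 i
  have hprodTc : (∏ i ∈ (Tᶜ : Finset S), x i) ≠ 0 :=
    Finset.prod_ne_zero_iff.mpr fun i _ => hx0 i
  have hprodS : (∏ i : S, x i) = (∏ i ∈ T, x i) * ∏ i ∈ (Tᶜ : Finset S), x i :=
    (Finset.prod_mul_prod_compl T x).symm
  rw [hprodS]
  field_simp
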